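/- arXiv:2007.13496 — 3 statements merged into one kernel-verified Lean document; each statement's English description precedes it below -/
import Mathlib

section
/- For all real numbers α > 1 and β > 0, the sum ∑_{k=0}^∞ exp(-β·α^k) is at most ln(1 + α/β) / ln(α). -/
open Real

/-- Key pointwise estimate: for `t > 0` and `α > 1`,
`exp (-t) * log α ≤ log ((t + α) / (t + 1))`. -/
lemma exp_neg_mul_log_le (α t : ℝ) (hα : 1 < α) (ht : 0 < t) :
    Real.exp (-t) * Real.log α ≤ Real.log ((t + α) / (t + 1)) := by
  have ht1 : (0:ℝ) < t + 1 := by linarith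
  have hlogα : 0 < Real.log α := Real.log_pos hα
  -- exp (-t) ≤ 1 / (t+1)
  have h1 : Real.exp (-t) ≤ 1 / (t + 1) := by
    rw [Real.exp_neg, inv_eq_one_div]
    exact one_div_le_one_div_of_le (by linarith) (by linarith [Real.add_one_le_exp t])
  have h2 : Real.exp (-t) * Real.log α ≤ Real.log α / (t + 1) := by
    rw [div_eq_mul_one_div, mul_comm (Real.log α)]
    exact mul_le_mul_of_nonneg_right h1 hlogα.le
  refine h2.trans ?_
  -- Bernoulli: α ≤ ((t+α)/(t+1)) ^ (t+1)
  have hs : (0:ℝ) ≤ (α - 1) / (t + 1) := div_nonneg (by linarith) ht1.le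
  have hbern := one_add_mul_self_le_rpow_one_add (s := (α - 1) / (t + 1))
      (by linarith) (p := t + 1) (by linarith)
  have hval : 1 + (t + 1) * ((α - 1) / (t + 1)) = α := by
    field_simp
    ring
  have hbase : 1 + (α - 1) / (t + 1) = (t + α) / (t + 1) := by
    field_simp
    ring
  rw [hval, hbase] at hbern
  have hbasepos : 0 < (t + α) / (t + 1) := div_pos (by linarith) ht1
  have h3 : Real.log α ≤ (t + 1) * Real.log ((t + α) / (t + 1)) := by
    have := Real.log_le_log (by linarith) hbern
    rwa [Real.log_rpow hbasepos] at this
  rw [div_le_iff₀ ht1]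
  linarith

theorem geometric_exp_sum_bound (α β : ℝ) (hα : 1 < α) (hβ : 0 < β) :
    ∑' k : ℕ, Real.exp (-β * α ^ k) ≤ Real.log (1 + α / β) / Real.log α := by
  have hα0 : (0:ℝ) < α := by linarith
  have hlogα : 0 < Real.log α := Real.log_pos hα
  set g : ℕ → ℝ := fun k => Real.log (1 + α / (β * α ^ k)) / Real.log α with hg
  have htpos : ∀ k : ℕ, 0 < β * α ^ k := fun k => mul_pos hβ (pow_pos hα0 k)
  -- termwise bound
  have hterm : ∀ k : ℕ, Real.exp (-β * α ^ k) ≤ g k - g (k + 1) := by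
    intro k
    set t : ℝ := β * α ^ k with htdef
    have ht : 0 < t := htpos k
    have ht1 : (0:ℝ) < t + 1 := by linarith
    have hnext : β * α ^ (k + 1) = t * α := by
      rw [htdef, pow_succ]; ring
    have hdiff : g k - g (k + 1) = Real.log ((t + α) / (t + 1)) / Real.log α := by
      rw [hg]
      simp only [hnext]
      rw [div_sub_div_same]
      congr 1
      rw [← Real.log_div (by positivity) (by positivity)]
      congr 1
      field_simp
      ring
    rw [hdiff, le_div_iff₀ hlogα, neg_mul, ← htdef]
    exact exp_neg_mul_log_le α t hα ht
  have hgnonneg : ∀ k : ℕ, 0 ≤ g k := by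
    intro k
    apply div_nonneg _ hlogα.le
    apply Real.log_nonneg
    have : 0 ≤ α / (β * α ^ k) := div_nonneg hα0.le (htpos k).le
    linarith
  have hg0 : g 0 = Real.log (1 + α / β) / Real.log α := by
    simp [hg]
  refine Real.tsum_le_of_sum_range_le (fun n => (Real.exp_pos _).le) ?_
  intro n
  calc ∑ i ∈ Finset.range n, Real.exp (-β * α ^ i)
      ≤ ∑ i ∈ Finset.range n, (g i - g (i + 1)) :=
        Finset.sum_le_sum fun i _ => hterm i
    _ = g 0 - g n := Finset.sum_range_sub' g n
    _ ≤ g 0 := by linarith [hgnonneg n]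
    _ = _ := hg0
end

section
/- For all real x > 0, the exponential integral E₁(x) = ∫_x^∞ e^{-w}/w dw satisfies E₁(x) ≤ e^{-x} · ln(1 + 1/x). -/
open Real MeasureTheory Set Filter

theorem exponential_integral_bound (x : ℝ) (hx : 0 < x) :
    ∫ w in Set.Ioi x, Real.exp (-w) / w ≤ Real.exp (-x) * Real.log (1 + 1 / x) := by
  set h : ℝ → ℝ := fun w => Real.exp (-w) * Real.log (1 + 1 / w) with hh
  set g : ℝ → ℝ := fun w => Real.exp (-w) * Real.log (1 + 1 / w)
      + Real.exp (-w) / (w ^ 2 + w) with hg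
  -- derivative of h
  have hderiv : ∀ w : ℝ, 0 < w → HasDerivAt h (-g w) w := by
    intro w hw
    have hne : w ≠ 0 := hw.ne'
    have h1 : (0:ℝ) < 1 + 1 / w := by positivity
    have d1 : HasDerivAt (fun w : ℝ => Real.exp (-w)) (-Real.exp (-w)) w := by
      simpa using ((hasDerivAt_id w).neg).exp
    have d2 : HasDerivAt (fun w : ℝ => 1 + 1 / w) (-(w ^ 2)⁻¹) w := by
      simpa [one_div] using (hasDerivAt_inv hne).const_add 1
    have d3 : HasDerivAt (fun w : ℝ => Real.log (1 + 1 / w))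
        (-(w ^ 2)⁻¹ / (1 + 1 / w)) w := d2.log h1.ne'
    have : HasDerivAt (fun w : ℝ => Real.exp (-w) * Real.log (1 + 1 / w))
        (-Real.exp (-w) * Real.log (1 + 1 / w) + Real.exp (-w) * (-(w ^ 2)⁻¹ / (1 + 1 / w))) w :=
      d1.mul d3
    convert this using 1
    have hw2 : w ^ 2 + w ≠ 0 := by positivity
    rw [hg]
    field_simp
    ring
  -- pointwise bound on Ioi x
  have key : ∀ w ∈ Ioi x, Real.exp (-w) / w ≤ g w := by
    intro w hw
    have hw0 : 0 < w := hx.trans hw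
    have h1 : (0:ℝ) < 1 + 1 / w := by positivity
    have hlog : 1 / (w + 1) ≤ Real.log (1 + 1 / w) := by
      have ht : (0:ℝ) < w / (w + 1) := by positivity
      have h2 := Real.log_le_sub_one_of_pos ht
      have heq : Real.log (w / (w + 1)) = - Real.log (1 + 1 / w) := by
        rw [← Real.log_inv]
        congr 1
        field_simp
      have h3 : w / (w + 1) - 1 = - (1 / (w + 1)) := by field_simp; ring
      rw [heq, h3] at h2
      linarith
    have hexp : (0:ℝ) < Real.exp (-w) := Real.exp_pos _
    have hsplit : (1:ℝ) / w = 1 / (w + 1) + 1 / (w ^ 2 + w) := by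
      field_simp
    have hwne : w ≠ 0 := hw0.ne'
    have hw1ne : w + 1 ≠ 0 := by positivity
    have : Real.exp (-w) / w = Real.exp (-w) * (1 / (w + 1)) + Real.exp (-w) / (w ^ 2 + w) := by
      field_simp
    rw [this, hg]
    have := mul_le_mul_of_nonneg_left hlog hexp.le
    linarith
  -- integrability of the dominating exp
  have hexpint : IntegrableOn (fun w : ℝ => Real.exp (-w)) (Ioi x) := by
    simpa using exp_neg_integrableOn_Ioi x one_pos
  -- integrability of g
  have hgcont : ContinuousOn g (Ioi x) := by
    apply ContinuousOn.add
    · apply ContinuousOn.mul (Continuous.continuousOn (by continuity))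
      apply ContinuousOn.log
      · apply ContinuousOn.add continuousOn_const
        exact ContinuousOn.div continuousOn_const continuousOn_id
          (fun w hw => (hx.trans hw).ne')
      · intro w hw
        have : (0:ℝ) < w := hx.trans hw
        positivity
    · apply ContinuousOn.div (Continuous.continuousOn (by continuity))
        (by fun_prop)
      intro w hw
      have : (0:ℝ) < w := hx.trans hw
      positivity
  have hgint : IntegrableOn g (Ioi x) := by
    have C : ℝ := 0
    apply Integrable.mono' (g := fun w => (Real.log (1 + 1 / x) + 1 / (x ^ 2 + x)) * Real.exp (-w))
      (hexpint.const_mul _)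
      (hgcont.aestronglyMeasurable measurableSet_Ioi)
    · filter_upwards [ae_restrict_mem measurableSet_Ioi] with w hw
      have hw0 : 0 < w := hx.trans hw
      have h1 : (0:ℝ) < 1 + 1 / w := by positivity
      have hlognn : 0 ≤ Real.log (1 + 1 / w) := Real.log_nonneg (by linarith [one_div_pos.mpr hw0])
      have hgnn : 0 ≤ g w := by
        have := (Real.exp_pos (-w)).le
        have h2 : (0:ℝ) < w ^ 2 + w := by positivity
        simp only [hg]
        positivity
      rw [Real.norm_eq_abs, abs_of_nonneg hgnn]
      have hlogle : Real.log (1 + 1 / w) ≤ Real.log (1 + 1 / x) := by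
        apply Real.log_le_log h1
        have := le_of_lt (Set.mem_Ioi.mp hw)
        gcongr
      have hfrac : 1 / (w ^ 2 + w) ≤ 1 / (x ^ 2 + x) := by
        have : (0:ℝ) < x ^ 2 + x := by positivity
        gcongr
        · exact le_of_lt hw
        · exact le_of_lt hw
      have he : (0:ℝ) < Real.exp (-w) := Real.exp_pos _
      calc g w = Real.exp (-w) * Real.log (1 + 1 / w) + Real.exp (-w) * (1 / (w ^ 2 + w)) := by
            simp only [hg]; ring
        _ ≤ Real.exp (-w) * Real.log (1 + 1 / x) + Real.exp (-w) * (1 / (x ^ 2 + x)) := by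
            gcongr
        _ = (Real.log (1 + 1 / x) + 1 / (x ^ 2 + x)) * Real.exp (-w) := by ring
  -- integrability of LHS integrand
  have hfint : IntegrableOn (fun w : ℝ => Real.exp (-w) / w) (Ioi x) := by
    apply Integrable.mono' (g := fun w => (1 / x) * Real.exp (-w)) (hexpint.const_mul _)
    · apply ContinuousOn.aestronglyMeasurable _ measurableSet_Ioi
      exact ContinuousOn.div (Continuous.continuousOn (by continuity)) continuousOn_id
        (fun w hw => (hx.trans hw).ne')
    · filter_upwards [ae_restrict_mem measurableSet_Ioi] with w hw
      have hw0 : 0 < w := hx.trans hw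
      have he : (0:ℝ) < Real.exp (-w) := Real.exp_pos _
      rw [Real.norm_eq_abs, abs_of_nonneg (by positivity)]
      rw [div_eq_mul_one_div, mul_comm (1/x)]
      gcongr
      exact le_of_lt hw
  -- h tends to 0 at top
  have htend : Tendsto h atTop (nhds 0) := by
    have t1 : Tendsto (fun w : ℝ => Real.exp (-w)) atTop (nhds 0) := by
      simpa using Real.tendsto_exp_neg_atTop_nhds_zero
    have t2 : Tendsto (fun w : ℝ => Real.log (1 + 1 / w)) atTop (nhds 0) := by
      have t3 : Tendsto (fun w : ℝ => 1 + 1 / w) atTop (nhds 1) := by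
        simpa [one_div] using (tendsto_const_nhds (x := (1:ℝ))).add tendsto_inv_atTop_zero
      have := ((Real.continuousAt_log (by norm_num : (1:ℝ) ≠ 0)).tendsto).comp t3
      simpa [Function.comp_def] using this
    simpa [hh, one_div] using t1.mul t2
  -- FTC
  have hFTC : ∫ w in Ioi x, g w = h x := by
    have := integral_Ioi_of_hasDerivAt_of_tendsto (f := h) (f' := fun w => -g w) (a := x) (m := 0)
      ?_ (fun w hw => hderiv w (hx.trans hw)) (hgint.neg) htend
    · have h2 : ∫ w in Ioi x, -g w = - ∫ w in Ioi x, g w := integral_neg _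
      rw [h2] at this
      linarith
    · exact ((hderiv x hx).continuousAt).continuousWithinAt
  calc ∫ w in Ioi x, Real.exp (-w) / w ≤ ∫ w in Ioi x, g w := by
        apply setIntegral_mono_on hfint hgint measurableSet_Ioi key
    _ = Real.exp (-x) * Real.log (1 + 1 / x) := hFTC
end

section
/- Let z be a complex number with |arg z| < π/3 and write √z for the principal square root. Then the change of variables t = √z + u gives -t³/3 + z·t = (2/3)·z^{3/2} - u³/3 - √z·u², and hence Hi(z)·exp(-(2/3)z^{3/2}) = π^{-1} ∫_{-√z}^∞ exp(-u³/3 - √z·u²) du, where the integral is over the contour from -√z to 0 and then along the positive real axis. -/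
open MeasureTheory

/-- The Scorer function `Hi`. -/
noncomputable def Hi (z : ℂ) : ℂ :=
  (Real.pi : ℂ)⁻¹ * ∫ t in Set.Ioi (0 : ℝ), Complex.exp (-(t : ℂ) ^ 3 / 3 + z * t)

open Complex Filter Set intervalIntegral in
private lemma cubic_ev (c2 c1 c0 : ℝ) :
    ∀ᶠ x in atTop, -x ^ 3 / 3 + c2 * x ^ 2 + c1 * x + c0 ≤ -x := by
  filter_upwards [Filter.eventually_ge_atTop (3 * (|c2| + |c1| + |c0|) + 3)] with x hx
  nlinarith [le_abs_self c2, le_abs_self c1, le_abs_self c0, abs_nonneg c2, abs_nonneg c1,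
    abs_nonneg c0, sq_nonneg x, mul_le_mul_of_nonneg_left hx (sq_nonneg x)]

open Complex Filter Set in
private lemma cubic_exp_tendsto (c2 c1 c0 : ℝ) :
    Tendsto (fun x => Real.exp (-x ^ 3 / 3 + c2 * x ^ 2 + c1 * x + c0)) atTop (nhds 0) :=
  Real.tendsto_exp_atBot.comp
    (tendsto_atBot_mono' atTop (cubic_ev c2 c1 c0) tendsto_neg_atTop_atBot)

private lemma re_cubic (x : ℝ) (p q r : ℂ) :
    (-(x : ℂ) ^ 3 / 3 + p * (x : ℂ) ^ 2 + q * (x : ℂ) + r).re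
      = -x ^ 3 / 3 + p.re * x ^ 2 + q.re * x + r.re := by
  simp [Complex.add_re, Complex.div_ofNat_re, Complex.mul_re, ← Complex.ofReal_pow]

open Complex Filter Set in
private lemma integrableOn_cexp_cubic (p q r : ℂ) (m : ℝ) :
    IntegrableOn (fun x : ℝ =>
      Complex.exp (-(x : ℂ) ^ 3 / 3 + p * (x : ℂ) ^ 2 + q * (x : ℂ) + r)) (Set.Ioi m) := by
  obtain ⟨M0, hM0⟩ := (cubic_ev p.re q.re r.re).exists_forall_of_atTop
  set F := fun x : ℝ => Complex.exp (-(x : ℂ) ^ 3 / 3 + p * (x : ℂ) ^ 2 + q * (x : ℂ) + r)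
    with hF
  have hcont : Continuous F := by
    apply Continuous.cexp; fun_prop
  have hIoi : IntegrableOn F (Set.Ioi (max m M0)) := by
    refine Integrable.mono' (g := fun x => Real.exp (-x)) ?_
      hcont.aestronglyMeasurable.restrict ?_
    · simpa [IntegrableOn] using exp_neg_integrableOn_Ioi (max m M0) (by norm_num : (0:ℝ) < 1)
    · filter_upwards [ae_restrict_mem measurableSet_Ioi] with x hx
      rw [hF, Complex.norm_exp, re_cubic]
      exact Real.exp_le_exp.2 (hM0 x (le_of_lt (lt_of_le_of_lt (le_max_right m M0) hx)))
  have hIoc : IntegrableOn F (Set.Ioc m (max m M0)) :=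
    (hcont.continuousOn).integrableOn_Icc.mono_set Set.Ioc_subset_Icc_self
  have h := hIoc.union hIoi
  rwa [Set.Ioc_union_Ioi_eq_Ioi (le_max_left m M0)] at h

theorem Hi_contour_representation (z : ℂ) (hz : z ≠ 0) (harg : |z.arg| < Real.pi / 3) :
    (∀ u : ℂ,
      -(z ^ ((1 : ℂ) / 2) + u) ^ 3 / 3 + z * (z ^ ((1 : ℂ) / 2) + u)
        = 2 / 3 * z ^ ((3 : ℂ) / 2) - u ^ 3 / 3 - z ^ ((1 : ℂ) / 2) * u ^ 2) ∧
    Hi z * Complex.exp (-(2 / 3) * z ^ ((3 : ℂ) / 2))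
      = (Real.pi : ℂ)⁻¹ *
        ((∫ y in (0 : ℝ)..(z ^ ((1 : ℂ) / 2)).im,
            Complex.I * Complex.exp (-(-(z ^ ((1 : ℂ) / 2)) + Complex.I * y) ^ 3 / 3
              - z ^ ((1 : ℂ) / 2) * (-(z ^ ((1 : ℂ) / 2)) + Complex.I * y) ^ 2)) +
          ∫ x in Set.Ioi (-(z ^ ((1 : ℂ) / 2)).re),
            Complex.exp (-(x : ℂ) ^ 3 / 3 - z ^ ((1 : ℂ) / 2) * (x : ℂ) ^ 2)) := by
  open Complex Filter Set intervalIntegral in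
  set s : ℂ := z ^ ((1 : ℂ) / 2) with hs_def
  have hs2 : s ^ 2 = z := by
    rw [hs_def, sq, ← Complex.cpow_add _ _ hz]
    norm_num
  have hs3 : z ^ ((3 : ℂ) / 2) = s ^ 3 := by
    have h : (3 : ℂ) / 2 = 1 / 2 + 1 / 2 + 1 / 2 := by norm_num
    rw [h, Complex.cpow_add _ _ hz, Complex.cpow_add _ _ hz, ← hs_def]
    ring
  have h1 : ∀ u : ℂ, -(s + u) ^ 3 / 3 + z * (s + u)
      = 2 / 3 * z ^ ((3 : ℂ) / 2) - u ^ 3 / 3 - s * u ^ 2 := by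
    intro u
    rw [hs3, ← hs2]; ring
  refine ⟨h1, ?_⟩
  set F : ℂ → ℂ := fun w => Complex.exp (-w ^ 3 / 3 - s * w ^ 2) with hF
  set E : ℂ := -(2 / 3) * z ^ ((3 : ℂ) / 2) with hE
  set G : ℝ → ℂ := fun t => Complex.exp (-(t : ℂ) ^ 3 / 3 + z * t + E) with hG
  set Cs : ℝ := ‖s‖ with hCs
  -- integrabilities
  have hgint : IntegrableOn (fun x : ℝ => F ((x : ℂ) - (s.im : ℂ) * Complex.I))
      (Set.Ioi (-s.re)) := by
    have heq : (fun x : ℝ => F ((x : ℂ) - (s.im : ℂ) * Complex.I))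
        = fun x : ℝ => Complex.exp (-(x : ℂ) ^ 3 / 3 + ((s.im : ℂ) * Complex.I - s) * (x : ℂ) ^ 2
            + ((s.im : ℂ) ^ 2 + 2 * s * (s.im : ℂ) * Complex.I) * (x : ℂ)
            + (-(s.im : ℂ) ^ 3 * Complex.I / 3 + s * (s.im : ℂ) ^ 2)) := by
      funext x
      simp only [hF]
      congr 1
      have hI2 : (Complex.I) ^ 2 = -1 := Complex.I_sq
      ring_nf
      rw [Complex.I_sq, show (Complex.I)^3 = -Complex.I by
        rw [pow_succ, Complex.I_sq]; ring]
      ring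
    rw [heq]
    exact integrableOn_cexp_cubic _ _ _ _
  have hfint : IntegrableOn (fun x : ℝ => F (x : ℂ)) (Set.Ioi (-s.re)) := by
    have heq : (fun x : ℝ => F (x : ℂ))
        = fun x : ℝ => Complex.exp (-(x : ℂ) ^ 3 / 3 + (-s) * (x : ℂ) ^ 2
            + 0 * (x : ℂ) + 0) := by
      funext x; simp only [hF]; congr 1; ring
    rw [heq]
    exact integrableOn_cexp_cubic _ _ _ _
  have hGint : IntegrableOn G (Set.Ioi (0 : ℝ)) := by
    have heq : G = fun t : ℝ => Complex.exp (-(t : ℂ) ^ 3 / 3 + 0 * (t : ℂ) ^ 2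
        + z * (t : ℂ) + E) := by
      funext t; simp only [hG]; congr 1; ring
    rw [heq]
    exact integrableOn_cexp_cubic _ _ _ _
  -- f is entire
  have hfd : Differentiable ℂ F := by
    apply Differentiable.cexp; fun_prop
  -- vertical integral tends to zero
  have hvert : Tendsto (fun R : ℝ => Complex.I * ∫ y in (-s.im)..(0:ℝ),
      F ((R : ℂ) + (y : ℂ) * Complex.I)) atTop (nhds 0) := by
    apply squeeze_zero_norm' (a := fun R : ℝ =>
      Real.exp (-R ^ 3 / 3 + Cs * R ^ 2 + s.im ^ 2 * R + Cs * s.im ^ 2) * |s.im|)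
    · filter_upwards [eventually_ge_atTop (0 : ℝ)] with R hR
      rw [norm_mul, Complex.norm_I, one_mul]
      have hb : ∀ y ∈ Set.uIoc (-s.im) (0:ℝ), ‖F ((R : ℂ) + (y : ℂ) * Complex.I)‖
          ≤ Real.exp (-R ^ 3 / 3 + Cs * R ^ 2 + s.im ^ 2 * R + Cs * s.im ^ 2) := by
        intro y hy
        have hy2 : y ^ 2 ≤ s.im ^ 2 := by
          rcases Set.mem_uIoc.mp hy with ⟨hy1, hy2⟩ | ⟨hy1, hy2⟩ <;> nlinarith
        set w : ℂ := (R : ℂ) + (y : ℂ) * Complex.I with hw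
        rw [hF, Complex.norm_exp, Real.exp_le_exp]
        have hw3 : (w ^ 3).re = R ^ 3 - 3 * R * y ^ 2 := by
          rw [hw]; simp [pow_succ, Complex.mul_re, Complex.mul_im]; ring
        have hre : (-w ^ 3 / 3 - s * w ^ 2).re = -(w ^ 3).re / 3 - (s * w ^ 2).re := by
          simp [Complex.sub_re, Complex.neg_re, Complex.div_ofNat_re, neg_div]
        rw [hre, hw3]
        have hCs0 : (0:ℝ) ≤ Cs := by rw [hCs]; exact norm_nonneg _
        have habs : -(s * w ^ 2).re ≤ Cs * (R ^ 2 + y ^ 2) := by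
          have h1 : -(s * w ^ 2).re ≤ ‖s * w ^ 2‖ :=
            (neg_le_abs _).trans (Complex.abs_re_le_norm (s * w ^ 2))
          have h2 : ‖s * w ^ 2‖ = Cs * (R ^ 2 + y ^ 2) := by
            rw [norm_mul, norm_pow, hCs]
            congr 1
            rw [Complex.sq_norm, hw, Complex.normSq_add_mul_I]
          linarith
        nlinarith [habs, mul_le_mul_of_nonneg_left hy2 hR, mul_le_mul_of_nonneg_left hy2 hCs0]
      have := intervalIntegral.norm_integral_le_of_norm_le_const hb
      calc ‖∫ y in (-s.im)..(0:ℝ), F ((R : ℂ) + (y : ℂ) * Complex.I)‖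
          ≤ Real.exp (-R ^ 3 / 3 + Cs * R ^ 2 + s.im ^ 2 * R + Cs * s.im ^ 2) * |0 - -s.im| :=
            this
        _ = Real.exp (-R ^ 3 / 3 + Cs * R ^ 2 + s.im ^ 2 * R + Cs * s.im ^ 2) * |s.im| := by
            rw [zero_sub, abs_neg, abs_neg]
    · simpa using (cubic_exp_tendsto Cs (s.im ^ 2) (Cs * s.im ^ 2)).mul_const |s.im|
  -- rectangle identity
  have hrect : ∀ R : ℝ,
      (∫ x in (-s.re)..R, F ((x : ℂ) - (s.im : ℂ) * Complex.I))
        = (∫ x in (-s.re)..R, F (x : ℂ))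
          + (Complex.I * ∫ y in (-s.im)..(0:ℝ), F (-(s.re : ℂ) + (y : ℂ) * Complex.I))
          - Complex.I * ∫ y in (-s.im)..(0:ℝ), F ((R : ℂ) + (y : ℂ) * Complex.I) := by
    intro R
    have h0 := Complex.integral_boundary_rect_eq_zero_of_differentiableOn F (-s) (R : ℂ)
      hfd.differentiableOn
    simp only [Complex.neg_re, Complex.neg_im, Complex.ofReal_re, Complex.ofReal_im,
      Complex.ofReal_neg, Complex.ofReal_zero, zero_mul, add_zero, smul_eq_mul] at h0
    simp only [neg_mul, ← sub_eq_add_neg] at h0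
    linear_combination h0
  -- limits along the horizontal lines
  have hA : Tendsto (fun R : ℝ => ∫ x in (-s.re)..R, F ((x : ℂ) - (s.im : ℂ) * Complex.I))
      atTop (nhds (∫ x in Set.Ioi (-s.re), F ((x : ℂ) - (s.im : ℂ) * Complex.I))) :=
    intervalIntegral_tendsto_integral_Ioi _ hgint tendsto_id
  have hB : Tendsto (fun R : ℝ => ∫ x in (-s.re)..R, F (x : ℂ))
      atTop (nhds (∫ x in Set.Ioi (-s.re), F (x : ℂ))) :=
    intervalIntegral_tendsto_integral_Ioi _ hfint tendsto_id
  set V : ℂ := Complex.I * ∫ y in (-s.im)..(0:ℝ), F (-(s.re : ℂ) + (y : ℂ) * Complex.I)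
    with hV
  have key1 : (∫ x in Set.Ioi (-s.re), F ((x : ℂ) - (s.im : ℂ) * Complex.I))
      = (∫ x in Set.Ioi (-s.re), F (x : ℂ)) + V := by
    have hA' : Tendsto (fun R : ℝ => ∫ x in (-s.re)..R, F ((x : ℂ) - (s.im : ℂ) * Complex.I))
        atTop (nhds ((∫ x in Set.Ioi (-s.re), F (x : ℂ)) + V - 0)) := by
      simp_rw [hrect]
      exact (hB.add tendsto_const_nhds).sub hvert
    have := tendsto_nhds_unique hA hA'
    rwa [sub_zero] at this
  -- shift: integral of G over (0,∞) equals integral of F(x - i Im s) over (-Re s, ∞)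
  have hGg : ∀ t : ℝ, G t = F (((t - s.re : ℝ) : ℂ) - (s.im : ℂ) * Complex.I) := by
    intro t
    simp only [hG, hF]
    have hts : (((t - s.re : ℝ) : ℂ) - (s.im : ℂ) * Complex.I) = (t : ℂ) - s := by
      apply Complex.ext <;> simp
    rw [hts]
    congr 1
    rw [hE, hs3, ← hs2]
    ring
  have key2 : (∫ t in Set.Ioi (0 : ℝ), G t)
      = ∫ x in Set.Ioi (-s.re), F ((x : ℂ) - (s.im : ℂ) * Complex.I) := by
    have hE' : Tendsto (fun R : ℝ => ∫ t in (0 : ℝ)..(R + s.re), G t) atTop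
        (nhds (∫ t in Set.Ioi (0 : ℝ), G t)) :=
      intervalIntegral_tendsto_integral_Ioi _ hGint
        (tendsto_atTop_add_const_right _ _ tendsto_id)
    have hF2 : ∀ R : ℝ, (∫ t in (0 : ℝ)..(R + s.re), G t)
        = ∫ x in (-s.re)..R, F ((x : ℂ) - (s.im : ℂ) * Complex.I) := by
      intro R
      have : (∫ t in (0 : ℝ)..(R + s.re), G t)
          = ∫ t in (0 : ℝ)..(R + s.re),
              (fun x : ℝ => F ((x : ℂ) - (s.im : ℂ) * Complex.I)) (t - s.re) := by
        apply intervalIntegral.integral_congr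
        intro t _
        exact hGg t
      rw [this, intervalIntegral.integral_comp_sub_right
        (fun x : ℝ => F ((x : ℂ) - (s.im : ℂ) * Complex.I)) s.re, zero_sub,
        add_sub_cancel_right]
    have hE'' : Tendsto (fun R : ℝ => ∫ x in (-s.re)..R, F ((x : ℂ) - (s.im : ℂ) * Complex.I))
        atTop (nhds (∫ t in Set.Ioi (0 : ℝ), G t)) := by
      simp_rw [← hF2]; exact hE'
    exact tendsto_nhds_unique hE'' hA
  -- rewrite the target vertical integral
  have hVtarget : (∫ y in (0 : ℝ)..s.im,
      Complex.I * Complex.exp (-(-s + Complex.I * (y : ℂ)) ^ 3 / 3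
        - s * (-s + Complex.I * (y : ℂ)) ^ 2)) = V := by
    rw [intervalIntegral.integral_const_mul, hV]
    congr 1
    have : (∫ y in (0 : ℝ)..s.im, Complex.exp (-(-s + Complex.I * (y : ℂ)) ^ 3 / 3
        - s * (-s + Complex.I * (y : ℂ)) ^ 2))
        = ∫ y in (0 : ℝ)..s.im,
            (fun y : ℝ => F (-(s.re : ℂ) + (y : ℂ) * Complex.I)) (y - s.im) := by
      apply intervalIntegral.integral_congr
      intro y _
      have hpt : -(s.re : ℂ) + (((y - s.im : ℝ)) : ℂ) * Complex.I
          = -s + Complex.I * (y : ℂ) := by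
        apply Complex.ext <;> simp <;> ring
      simp only [hF]
      rw [hpt]
    rw [this, intervalIntegral.integral_comp_sub_right
      (fun y : ℝ => F (-(s.re : ℂ) + (y : ℂ) * Complex.I)) s.im, zero_sub, sub_self]
  -- final assembly
  have hHi : Hi z * Complex.exp E = (Real.pi : ℂ)⁻¹ * ∫ t in Set.Ioi (0 : ℝ), G t := by
    rw [Hi, mul_assoc, ← MeasureTheory.integral_mul_const]
    congr 1
    apply setIntegral_congr_fun measurableSet_Ioi
    intro t _
    simp only [hG, ← Complex.exp_add]
  rw [hHi, key2, key1, hVtarget]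
  ring
end
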